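/- Under the Basic Assumption, suppose σ^ν, θ^ν → ∞, ε^ν → 0, θ^ν·|τ^ν − τ| → 0, there exists an optimal solution (x*, y*) of (P) such that the value function V is calm at x*, and for each ν, (x^ν, y^ν, u^ν, α^ν, λ^ν) is an ε^ν-optimal solution of (P)^ν. Suppose along a subsequence N ⊂ ℕ one has (x^ν, y^ν, u^ν, α^ν) → (x̂, ŷ, û, α̂) and V is locally calm at x̂. If Y^ν = Y for all ν sufficiently large, then (x̂, ŷ) is an optimal solution of (P) and 𝔪^ν → 𝔪 along N, with 𝔪 a real number. -/

import Mathlib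

open Filter Topology Metric Set

attribute [local instance] Classical.propDecidable

noncomputable section

/-- `ℝ^n` with the Euclidean norm. -/
abbrev Rn (n : ℕ) : Type := EuclideanSpace ℝ (Fin n)

variable {n m : ℕ} {Q : Type*} [NormedAddCommGroup Q]

/-- `(x, y)` is feasible in the bilevel problem (P): `x ∈ X` and
`y ∈ τ-argmin_{z ∈ Y} { g(x,z) | H(x,z) ∈ D }`. -/
def PFeas (X : Set (Rn n)) (Y : Set (Rn m)) (D : Set Q)
    (g : Rn n × Rn m → ℝ) (H : Rn n × Rn m → Q) (τ : ℝ)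
    (x : Rn n) (y : Rn m) : Prop :=
  x ∈ X ∧ y ∈ Y ∧ H (x, y) ∈ D ∧
    ∀ z ∈ Y, H (x, z) ∈ D → g (x, y) ≤ g (x, z) + τ

/-- The minimum value `𝔪` of (P). -/
def PVal (X : Set (Rn n)) (Y : Set (Rn m)) (D : Set Q)
    (f : Rn n × Rn m → EReal) (g : Rn n × Rn m → ℝ) (H : Rn n × Rn m → Q)
    (τ : ℝ) : EReal :=
  ⨅ (x : Rn n) (y : Rn m) (_ : PFeas X Y D g H τ x y), f (x, y)

/-- Optimal solution of (P): feasible, finite objective value attaining `𝔪`. -/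
def POpt (X : Set (Rn n)) (Y : Set (Rn m)) (D : Set Q)
    (f : Rn n × Rn m → EReal) (g : Rn n × Rn m → ℝ) (H : Rn n × Rn m → Q)
    (τ : ℝ) (x : Rn n) (y : Rn m) : Prop :=
  PFeas X Y D g H τ x y ∧ f (x, y) ≠ ⊤ ∧ f (x, y) = PVal X Y D f g H τ

/-- Feasibility in the alternative problem (P)^ν with data `Yn, gn, Hn, lamBar, τn`. -/
def PnuFeas (X : Set (Rn n)) (Y : Set (Rn m)) (D : Set Q) (Yn : Set (Rn m))
    (gn : Rn n × Rn m → ℝ) (Hn : Rn n × Rn m → Q) (lamBar τn : ℝ)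
    (x : Rn n) (y : Rn m) (u : Q) (α lam : ℝ) : Prop :=
  x ∈ X ∧ y ∈ Y ∧ α ≤ 0 ∧ 0 ≤ lam ∧ lam ≤ lamBar ∧ Hn (x, y) + u ∈ D ∧
    ∀ z ∈ Yn, gn (x, y) + α ≤ gn (x, z) + lam * infDist (Hn (x, z)) D + τn

/-- Objective function of (P)^ν: `f^ν(x,y) + σ^ν ‖u‖ - θ^ν α`. -/
def PnuObj (fn : Rn n × Rn m → EReal) (σn θn : ℝ)
    (x : Rn n) (y : Rn m) (u : Q) (α : ℝ) : EReal :=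
  fn (x, y) + ((σn * ‖u‖ - θn * α : ℝ) : EReal)

/-- The minimum value `𝔪^ν` of (P)^ν. -/
def PnuVal (X : Set (Rn n)) (Y : Set (Rn m)) (D : Set Q) (Yn : Set (Rn m))
    (fn : Rn n × Rn m → EReal) (gn : Rn n × Rn m → ℝ) (Hn : Rn n × Rn m → Q)
    (σn θn lamBar τn : ℝ) : EReal :=
  ⨅ (x : Rn n) (y : Rn m) (u : Q) (α : ℝ) (lam : ℝ)
    (_ : PnuFeas X Y D Yn gn Hn lamBar τn x y u α lam),
    PnuObj fn σn θn x y u α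

/-- `ε`-optimal solution of (P)^ν: feasible with finite objective value at most `𝔪^ν + ε`. -/
def PnuEps (X : Set (Rn n)) (Y : Set (Rn m)) (D : Set Q) (Yn : Set (Rn m))
    (fn : Rn n × Rn m → EReal) (gn : Rn n × Rn m → ℝ) (Hn : Rn n × Rn m → Q)
    (σn θn lamBar τn ε : ℝ)
    (x : Rn n) (y : Rn m) (u : Q) (α lam : ℝ) : Prop :=
  PnuFeas X Y D Yn gn Hn lamBar τn x y u α lam ∧
    PnuObj fn σn θn x y u α ≠ ⊤ ∧
    PnuObj fn σn θn x y u α ≤ PnuVal X Y D Yn fn gn Hn σn θn lamBar τn + (ε : EReal)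

/-- The value function `V(x,u) = inf_{y ∈ Y} { g(x,y) | H(x,y) + u ∈ D }`. -/
def Vfun (Y : Set (Rn m)) (D : Set Q)
    (g : Rn n × Rn m → ℝ) (H : Rn n × Rn m → Q)
    (x : Rn n) (u : Q) : EReal :=
  ⨅ (y : Rn m) (_ : y ∈ Y ∧ H (x, y) + u ∈ D), (g (x, y) : EReal)

/-- The value function `V` is calm at `x` with penalty threshold `lam`. -/
def CalmAtWith (Y : Set (Rn m)) (D : Set Q)
    (g : Rn n × Rn m → ℝ) (H : Rn n × Rn m → Q)
    (x : Rn n) (lam : ℝ) : Prop :=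
  0 ≤ lam ∧ ∀ u : Q,
    Vfun Y D g H x 0 - ((lam * ‖u‖ : ℝ) : EReal) ≤ Vfun Y D g H x u

/-- The value function `V` is calm at `x`. -/
def CalmAt (Y : Set (Rn m)) (D : Set Q)
    (g : Rn n × Rn m → ℝ) (H : Rn n × Rn m → Q) (x : Rn n) : Prop :=
  ∃ lam : ℝ, CalmAtWith Y D g H x lam

/-- The value function `V` is locally calm at `xbar`. -/
def LocallyCalmAt (Y : Set (Rn m)) (D : Set Q)
    (g : Rn n × Rn m → ℝ) (H : Rn n × Rn m → Q) (xbar : Rn n) : Prop :=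
  ∃ lam ρ : ℝ, 0 ≤ lam ∧ 0 < ρ ∧
    ∀ x ∈ Metric.closedBall xbar ρ, ∀ u : Q,
      Vfun Y D g H x 0 - ((lam * ‖u‖ : ℝ) : EReal) ≤ Vfun Y D g H x u

/-- The penalty-based value function `μ(x,λ) = inf_{y ∈ S} [g(x,y) + λ dist(H(x,y), D)]`. -/
def muSet (S : Set (Rn m)) (D : Set Q)
    (g : Rn n × Rn m → ℝ) (H : Rn n × Rn m → Q)
    (x : Rn n) (lam : ℝ) : EReal :=
  ⨅ (y : Rn m) (_ : y ∈ S), ((g (x, y) + lam * infDist (H (x, y)) D : ℝ) : EReal)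

/-- The Basic Assumption (Assumption 2.1). -/
structure BasicAssumption (X : Set (Rn n)) (Y : Set (Rn m)) (D : Set Q)
    (Yν : ℕ → Set (Rn m))
    (f : Rn n × Rn m → EReal) (fν : ℕ → Rn n × Rn m → EReal)
    (g : Rn n × Rn m → ℝ) (gν : ℕ → Rn n × Rn m → ℝ)
    (H : Rn n × Rn m → Q) (Hν : ℕ → Rn n × Rn m → Q)
    (σ θ lamBar τν δ η : ℕ → ℝ) : Prop where
  X_nonempty : X.Nonempty
  X_closed : IsClosed X
  Y_nonempty : Y.Nonempty
  Y_closed : IsClosed Y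
  D_nonempty : D.Nonempty
  D_closed : IsClosed D
  Yν_nonempty : ∀ ν, (Yν ν).Nonempty
  Yν_subset : ∀ ν, Yν ν ⊆ Y
  Yν_conv : ∀ y : Rn m,
    Tendsto (fun ν => infDist y (Yν ν)) atTop (𝓝 (infDist y Y))
  δ_lim : Tendsto δ atTop (𝓝 0)
  g_err : ∀ ν, ∀ x ∈ X, ∀ y ∈ Y, |gν ν (x, y) - g (x, y)| ≤ δ ν
  g_cont : ContinuousOn g (X ×ˢ Y)
  η_lim : Tendsto η atTop (𝓝 0)
  H_err : ∀ ν, ∀ x ∈ X, ∀ y ∈ Y,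
    |infDist (Hν ν (x, y)) D - infDist (H (x, y)) D| ≤ η ν
  H_cont : ContinuousOn H (X ×ˢ Y)
  f_ne_bot : ∀ p, f p ≠ ⊥
  fν_ne_bot : ∀ ν p, fν ν p ≠ ⊥
  f_limsup : ∀ x ∈ X, ∀ y ∈ Y,
    limsup (fun ν => fν ν (x, y)) atTop ≤ f (x, y)
  f_liminf : ∀ x ∈ X, ∀ y ∈ Y, ∀ (xs : ℕ → Rn n) (ys : ℕ → Rn m),
    (∀ ν, xs ν ∈ X) → (∀ ν, ys ν ∈ Y) →
    Tendsto xs atTop (𝓝 x) → Tendsto ys atTop (𝓝 y) →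
    f (x, y) ≤ liminf (fun ν => fν ν (xs ν, ys ν)) atTop
  σ_nonneg : ∀ ν, 0 ≤ σ ν
  θ_nonneg : ∀ ν, 0 ≤ θ ν
  lamBar_nonneg : ∀ ν, 0 ≤ lamBar ν
  τν_nonneg : ∀ ν, 0 ≤ τν ν
  lamBar_top : Tendsto lamBar atTop atTop
  ση_lim : Tendsto (fun ν => σ ν * η ν) atTop (𝓝 0)
  θlamη_lim : Tendsto (fun ν => θ ν * lamBar ν * η ν) atTop (𝓝 0)
  θδ_lim : Tendsto (fun ν => θ ν * δ ν) atTop (𝓝 0)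


private lemma er_sub_le (a : EReal) (c d : ℝ) (h : (c : EReal) ≤ a + (d : EReal)) :
    ((c - d : ℝ) : EReal) ≤ a := by
  induction a using EReal.rec with
  | bot => simp at h
  | coe x =>
      rw [← EReal.coe_add, EReal.coe_le_coe_iff] at h
      exact EReal.coe_le_coe_iff.2 (by linarith)
  | top => exact le_top

private lemma er_le_add (a : EReal) (c d : ℝ) (h : a - (c : EReal) ≤ (d : EReal)) :
    a ≤ ((d + c : ℝ) : EReal) := by
  induction a using EReal.rec with
  | bot => exact bot_le
  | coe x =>
      rw [← EReal.coe_sub, EReal.coe_le_coe_iff] at h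
      exact EReal.coe_le_coe_iff.2 (by linarith)
  | top => rw [EReal.top_sub_coe] at h; exact absurd h (not_le.2 (EReal.coe_lt_top _))

private lemma er_le_of_forall (a : EReal) (r : ℝ) (h : ∀ ε : ℝ, 0 < ε → a ≤ ((r + ε : ℝ) : EReal)) :
    a ≤ (r : EReal) := by
  induction a using EReal.rec with
  | bot => exact bot_le
  | coe x =>
      refine EReal.coe_le_coe_iff.2 (le_of_forall_pos_le_add fun ε hε => ?_)
      exact EReal.coe_le_coe_iff.1 (h ε hε)
  | top => exact absurd (h 1 one_pos) (not_le.2 (EReal.coe_lt_top _))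

private lemma Vfun_le_of_mem {n m : ℕ} {Q : Type*} [NormedAddCommGroup Q]
    (Y : Set (Rn m)) (D : Set Q) (g : Rn n × Rn m → ℝ) (H : Rn n × Rn m → Q)
    (x : Rn n) (u : Q) {z : Rn m} (hz : z ∈ Y) (hm : H (x, z) + u ∈ D) :
    Vfun Y D g H x u ≤ ((g (x, z) : ℝ) : EReal) := iInf₂_le z ⟨hz, hm⟩

private lemma le_Vfun {n m : ℕ} {Q : Type*} [NormedAddCommGroup Q]
    (Y : Set (Rn m)) (D : Set Q) (g : Rn n × Rn m → ℝ) (H : Rn n × Rn m → Q)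
    (x : Rn n) (u : Q) (c : EReal) (h : ∀ w ∈ Y, H (x, w) + u ∈ D → c ≤ ((g (x, w) : ℝ) : EReal)) :
    c ≤ Vfun Y D g H x u := le_iInf fun w => le_iInf fun hw => h w hw.1 hw.2

private lemma Vfun_lt_exists {n m : ℕ} {Q : Type*} [NormedAddCommGroup Q]
    {Y : Set (Rn m)} {D : Set Q} {g : Rn n × Rn m → ℝ} {H : Rn n × Rn m → Q}
    {x : Rn n} {u : Q} {c : EReal} (h : Vfun Y D g H x u < c) :
    ∃ w, w ∈ Y ∧ H (x, w) + u ∈ D ∧ ((g (x, w) : ℝ) : EReal) < c := by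
  unfold Vfun at h
  rw [iInf_lt_iff] at h
  obtain ⟨w, hw⟩ := h
  rw [iInf_lt_iff] at hw
  obtain ⟨⟨h1, h2⟩, h3⟩ := hw
  exact ⟨w, h1, h2, h3⟩

private lemma blend_tendsto {E : Type*} [TopologicalSpace E] (φ : ℕ → ℕ) (hφ : StrictMono φ)
    (s : ℕ → E) (a : E) (h : Filter.Tendsto (fun k => s (φ k)) Filter.atTop (𝓝 a)) :
    Filter.Tendsto (fun ν => if ν ∈ Set.range φ then s ν else a) Filter.atTop (𝓝 a) := by
  refine Filter.tendsto_def.2 fun U hU => ?_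
  obtain ⟨K, hK⟩ := Filter.eventually_atTop.1 (h.eventually_mem hU)
  refine Filter.eventually_atTop.2 ⟨φ K, fun ν hν => ?_⟩
  by_cases h' : ν ∈ Set.range φ
  · obtain ⟨k, rfl⟩ := h'
    simp only [Set.mem_preimage]
    rw [if_pos (Set.mem_range_self k)]
    exact hK k (hφ.le_iff_le.1 hν)
  · simp only [Set.mem_preimage]
    rw [if_neg h']
    exact mem_of_mem_nhds hU

set_option maxHeartbeats 2000000 in
/-- Theorem 2.8(a): optimality under local calmness when `Y^ν = Y` eventually. -/
theorem Pnu_cluster_optimal_of_localCalm_full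
    [NormedSpace ℝ Q] [FiniteDimensional ℝ Q]
    (X : Set (Rn n)) (Y : Set (Rn m)) (D : Set Q) (Yν : ℕ → Set (Rn m))
    (f : Rn n × Rn m → EReal) (fν : ℕ → Rn n × Rn m → EReal)
    (g : Rn n × Rn m → ℝ) (gν : ℕ → Rn n × Rn m → ℝ)
    (H : Rn n × Rn m → Q) (Hν : ℕ → Rn n × Rn m → Q)
    (σ θ lamBar τν δ η : ℕ → ℝ) (τ : ℝ) (hτ : 0 ≤ τ)
    (ba : BasicAssumption X Y D Yν f fν g gν H Hν σ θ lamBar τν δ η)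
    (hσ : Tendsto σ atTop atTop) (hθ : Tendsto θ atTop atTop)
    (ε : ℕ → ℝ) (hε0 : ∀ ν, 0 ≤ ε ν) (hεlim : Tendsto ε atTop (𝓝 0))
    (hrate : Tendsto (fun ν => θ ν * |τν ν - τ|) atTop (𝓝 0))
    (xstar : Rn n) (ystar : Rn m)
    (hopt : POpt X Y D f g H τ xstar ystar)
    (hcalm : CalmAt Y D g H xstar)
    (xs : ℕ → Rn n) (ys : ℕ → Rn m) (us : ℕ → Q) (αs lams : ℕ → ℝ)
    (hsol : ∀ ν, PnuEps X Y D (Yν ν) (fν ν) (gν ν) (Hν ν)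
      (σ ν) (θ ν) (lamBar ν) (τν ν) (ε ν) (xs ν) (ys ν) (us ν) (αs ν) (lams ν))
    (φ : ℕ → ℕ) (hφ : StrictMono φ)
    (hatx : Rn n) (haty : Rn m) (hatu : Q) (hatα : ℝ)
    (hcx : Tendsto (fun k => xs (φ k)) atTop (𝓝 hatx))
    (hcy : Tendsto (fun k => ys (φ k)) atTop (𝓝 haty))
    (hcu : Tendsto (fun k => us (φ k)) atTop (𝓝 hatu))
    (hcα : Tendsto (fun k => αs (φ k)) atTop (𝓝 hatα))
    (hloc : LocallyCalmAt Y D g H hatx)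
    (hYν : ∀ᶠ ν in atTop, Yν ν = Y) :
    POpt X Y D f g H τ hatx haty ∧
    ∃ r : ℝ, PVal X Y D f g H τ = (r : EReal) ∧
      Tendsto (fun k =>
        PnuVal X Y D (Yν (φ k)) (fν (φ k)) (gν (φ k)) (Hν (φ k))
          (σ (φ k)) (θ (φ k)) (lamBar (φ k)) (τν (φ k))) atTop
        (𝓝 ((r : EReal))) := by
  classical
  obtain ⟨lamS, hlamS0, hcalmS⟩ := hcalm
  obtain ⟨feasS, fS_ne_top, hfSval⟩ := hopt
  set r : ℝ := (f (xstar, ystar)).toReal with hr_def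
  have hfS : f (xstar, ystar) = (r : EReal) := (EReal.coe_toReal fS_ne_top (ba.f_ne_bot _)).symm
  have hPVal : PVal X Y D f g H τ = (r : EReal) := by rw [← hfSval, hfS]
  obtain ⟨x0, hx0⟩ := ba.X_nonempty
  obtain ⟨y0, hy0⟩ := ba.Y_nonempty
  have hδ0 : ∀ ν, 0 ≤ δ ν := fun ν => le_trans (abs_nonneg _) (ba.g_err ν x0 hx0 y0 hy0)
  have hη0 : ∀ ν, 0 ≤ η ν := fun ν => le_trans (abs_nonneg _) (ba.H_err ν x0 hx0 y0 hy0)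
  have hxstarX : xstar ∈ X := feasS.1
  have hystarY : ystar ∈ Y := feasS.2.1
  -- Key exact-penalty inequality at `xstar` from calmness
  have hK : ∀ z ∈ Y, g (xstar, ystar) - τ ≤ g (xstar, z) + lamS * infDist (H (xstar, z)) D := by
    intro z hz
    obtain ⟨p, hpD, hp⟩ := ba.D_closed.exists_infDist_eq_dist ba.D_nonempty (H (xstar, z))
    have hmem : H (xstar, z) + (p - H (xstar, z)) ∈ D := by simpa using hpD
    have hnorm : ‖p - H (xstar, z)‖ = infDist (H (xstar, z)) D := by
      rw [hp, dist_eq_norm, norm_sub_rev]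
    have h1 : ((g (xstar, ystar) - τ : ℝ) : EReal) ≤ Vfun Y D g H xstar 0 := by
      refine le_Vfun _ _ _ _ _ _ _ fun w hw hmw => ?_
      have := feasS.2.2.2 w hw (by simpa using hmw)
      exact EReal.coe_le_coe_iff.2 (by linarith)
    have h2 : Vfun Y D g H xstar (p - H (xstar, z)) ≤ ((g (xstar, z) : ℝ) : EReal) :=
      Vfun_le_of_mem _ _ _ _ _ _ hz hmem
    have h4 : Vfun Y D g H xstar 0
        ≤ ((g (xstar, z) + lamS * ‖p - H (xstar, z)‖ : ℝ) : EReal) :=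
      er_le_add _ _ _ ((hcalmS _).trans h2)
    have h5 := EReal.coe_le_coe_iff.1 (h1.trans h4)
    rw [hnorm] at h5
    linarith
  -- Upper bound on the values of (P)^ν
  have hB : ∀ ε' : ℝ, 0 < ε' → ∀ᶠ ν in atTop,
      PnuVal X Y D (Yν ν) (fν ν) (gν ν) (Hν ν) (σ ν) (θ ν) (lamBar ν) (τν ν)
        ≤ ((r + ε' : ℝ) : EReal) := by
    intro ε' hε'
    have hf_ev : ∀ᶠ ν in atTop, fν ν (xstar, ystar) < ((r + ε' / 2 : ℝ) : EReal) := by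
      refine eventually_lt_of_limsup_lt
        (lt_of_le_of_lt ((ba.f_limsup _ hxstarX _ hystarY).trans_eq hfS) ?_)
      exact_mod_cast (by linarith : r < r + ε' / 2)
    have hs_lim : Tendsto
        (fun ν => σ ν * η ν + (2 * (θ ν * δ ν) + θ ν * lamBar ν * η ν + θ ν * |τν ν - τ|))
        atTop (𝓝 0) := by
      have := ba.ση_lim.add (((ba.θδ_lim.const_mul 2).add ba.θlamη_lim).add hrate)
      simpa using this
    have hs_ev := hs_lim.eventually_le_const (by linarith : (0:ℝ) < ε' / 2)
    have hlam_ev : ∀ᶠ ν in atTop, lamS ≤ lamBar ν := ba.lamBar_top.eventually_ge_atTop lamS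
    filter_upwards [hf_ev, hs_ev, hlam_ev] with ν hf hs hlamB
    obtain ⟨p, hpD, hp⟩ := ba.D_closed.exists_infDist_eq_dist ba.D_nonempty (Hν ν (xstar, ystar))
    have hmem : Hν ν (xstar, ystar) + (p - Hν ν (xstar, ystar)) ∈ D := by simpa using hpD
    have hnu : ‖p - Hν ν (xstar, ystar)‖ = infDist (Hν ν (xstar, ystar)) D := by
      rw [hp, dist_eq_norm, norm_sub_rev]
    have hule : ‖p - Hν ν (xstar, ystar)‖ ≤ η ν := by
      have h6 := abs_le.1 (ba.H_err ν xstar hxstarX ystar hystarY)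
      rw [infDist_zero_of_mem feasS.2.2.1] at h6
      rw [hnu]; linarith [h6.2]
    have hα0 : -(2 * δ ν + lamS * η ν + |τν ν - τ|) ≤ 0 := by
      have e1 := mul_nonneg hlamS0 (hη0 ν)
      have e2 := abs_nonneg (τν ν - τ)
      have e3 := hδ0 ν
      linarith
    have hfeas : PnuFeas X Y D (Yν ν) (gν ν) (Hν ν) (lamBar ν) (τν ν) xstar ystar
        (p - Hν ν (xstar, ystar)) (-(2 * δ ν + lamS * η ν + |τν ν - τ|)) lamS := by
      refine ⟨hxstarX, hystarY, hα0, hlamS0, hlamB, hmem, fun z hzYν => ?_⟩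
      have hzY := ba.Yν_subset ν hzYν
      have hKz := hK z hzY
      have hg1 := abs_le.1 (ba.g_err ν xstar hxstarX ystar hystarY)
      have hg2 := abs_le.1 (ba.g_err ν xstar hxstarX z hzY)
      have hH2 := abs_le.1 (ba.H_err ν xstar hxstarX z hzY)
      have h5 : lamS * infDist (H (xstar, z)) D - lamS * η ν
          ≤ lamS * infDist (Hν ν (xstar, z)) D := by
        nlinarith [mul_le_mul_of_nonneg_left hH2.1 hlamS0]
      have h6 : -(|τν ν - τ|) ≤ τν ν - τ := neg_abs_le _
      linarith
    have hval_le : PnuVal X Y D (Yν ν) (fν ν) (gν ν) (Hν ν) (σ ν) (θ ν) (lamBar ν) (τν ν)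
        ≤ PnuObj (fν ν) (σ ν) (θ ν) xstar ystar (p - Hν ν (xstar, ystar))
            (-(2 * δ ν + lamS * η ν + |τν ν - τ|)) := by
      unfold PnuVal
      exact iInf_le_of_le xstar (iInf_le_of_le ystar (iInf_le_of_le _ (iInf_le_of_le _
        (iInf_le_of_le lamS (iInf_le _ hfeas)))))
    refine hval_le.trans ?_
    have h6 : (σ ν * ‖p - Hν ν (xstar, ystar)‖
        - θ ν * (-(2 * δ ν + lamS * η ν + |τν ν - τ|)) : ℝ) ≤ ε' / 2 := by
      have e1 : σ ν * ‖p - Hν ν (xstar, ystar)‖ ≤ σ ν * η ν :=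
        mul_le_mul_of_nonneg_left hule (ba.σ_nonneg ν)
      have e2 : θ ν * (lamS * η ν) ≤ θ ν * lamBar ν * η ν := by
        rw [mul_assoc (θ ν)]
        exact mul_le_mul_of_nonneg_left (mul_le_mul_of_nonneg_right hlamB (hη0 ν)) (ba.θ_nonneg ν)
      have e3 : -(θ ν * (-(2 * δ ν + lamS * η ν + |τν ν - τ|)))
          = 2 * (θ ν * δ ν) + θ ν * (lamS * η ν) + θ ν * |τν ν - τ| := by ring
      linarith
    calc PnuObj (fν ν) (σ ν) (θ ν) xstar ystar (p - Hν ν (xstar, ystar))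
          (-(2 * δ ν + lamS * η ν + |τν ν - τ|))
        = fν ν (xstar, ystar) + ((σ ν * ‖p - Hν ν (xstar, ystar)‖
            - θ ν * (-(2 * δ ν + lamS * η ν + |τν ν - τ|)) : ℝ) : EReal) := rfl
      _ ≤ ((r + ε' / 2 : ℝ) : EReal) + ((ε' / 2 : ℝ) : EReal) :=
          add_le_add hf.le (EReal.coe_le_coe_iff.2 h6)
      _ = ((r + ε' : ℝ) : EReal) := by norm_cast; ring_nf
  -- subsequence setup
  have hφtop : Tendsto φ atTop atTop := hφ.tendsto_atTop
  have hfeasν : ∀ ν, PnuFeas X Y D (Yν ν) (gν ν) (Hν ν) (lamBar ν) (τν ν)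
      (xs ν) (ys ν) (us ν) (αs ν) (lams ν) := fun ν => (hsol ν).1
  have hxX : ∀ ν, xs ν ∈ X := fun ν => (hfeasν ν).1
  have hyY : ∀ ν, ys ν ∈ Y := fun ν => (hfeasν ν).2.1
  have hαle : ∀ ν, αs ν ≤ 0 := fun ν => (hfeasν ν).2.2.1
  have hlamle : ∀ ν, lams ν ≤ lamBar ν := fun ν => (hfeasν ν).2.2.2.2.1
  have hHmem : ∀ ν, Hν ν (xs ν, ys ν) + us ν ∈ D := fun ν => (hfeasν ν).2.2.2.2.2.1
  have hxhat : hatx ∈ X := ba.X_closed.mem_of_tendsto hcx (Eventually.of_forall fun k => hxX _)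
  have hyhat : haty ∈ Y := ba.Y_closed.mem_of_tendsto hcy (Eventually.of_forall fun k => hyY _)
  have hφtop' : Tendsto φ atTop atTop := hφ.tendsto_atTop
  have hFliminf : f (hatx, haty) ≤ liminf (fun k => fν (φ k) (xs (φ k), ys (φ k))) atTop := by
    classical
    set xt : ℕ → Rn n := fun ν => if ν ∈ Set.range φ then xs ν else hatx with hxt
    set yt : ℕ → Rn m := fun ν => if ν ∈ Set.range φ then ys ν else haty with hyt
    have hxtX : ∀ ν, xt ν ∈ X := by
      intro ν; simp only [hxt]; split_ifs with h
      exacts [hxX ν, hxhat]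
    have hytY : ∀ ν, yt ν ∈ Y := by
      intro ν; simp only [hyt]; split_ifs with h
      exacts [hyY ν, hyhat]
    have hxtten : Tendsto xt atTop (𝓝 hatx) := by
      rw [hxt]; exact blend_tendsto φ hφ xs hatx hcx
    have hytten : Tendsto yt atTop (𝓝 haty) := by
      rw [hyt]; exact blend_tendsto φ hφ ys haty hcy
    have h1 := ba.f_liminf hatx hxhat haty hyhat xt yt hxtX hytY hxtten hytten
    refine h1.trans ?_
    have h2 : liminf (fun ν => fν ν (xt ν, yt ν)) atTop
        ≤ liminf ((fun ν => fν ν (xt ν, yt ν)) ∘ φ) atTop := by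
      rw [liminf_comp]
      exact liminf_le_liminf_of_le hφtop'
    refine h2.trans_eq ?_
    apply congr_arg (fun u => liminf u atTop)
    funext k
    simp only [Function.comp, hxt, hyt, if_pos (Set.mem_range_self k)]
  have hsknn : ∀ ν, 0 ≤ σ ν * ‖us ν‖ - θ ν * αs ν := fun ν => by
    have h1 : 0 ≤ σ ν * ‖us ν‖ := mul_nonneg (ba.σ_nonneg ν) (norm_nonneg _)
    have h2 : θ ν * αs ν ≤ 0 := mul_nonpos_of_nonneg_of_nonpos (ba.θ_nonneg ν) (hαle ν)
    linarith
  have hbot : (⊥ : EReal) < f (hatx, haty) := bot_lt_iff_ne_bot.2 (ba.f_ne_bot _)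
  obtain ⟨b₀, _, hb₀⟩ := EReal.exists_between_coe_real hbot
  have hFev : ∀ᶠ k in atTop, (b₀ : EReal) < fν (φ k) (xs (φ k), ys (φ k)) :=
    eventually_lt_of_lt_liminf (lt_of_lt_of_le hb₀ hFliminf)
  have hobjle : ∀ᶠ k in atTop, PnuObj (fν (φ k)) (σ (φ k)) (θ (φ k)) (xs (φ k)) (ys (φ k))
      (us (φ k)) (αs (φ k)) ≤ ((r + 2 : ℝ) : EReal) := by
    filter_upwards [hφtop.eventually (hB 1 one_pos),
      hφtop.eventually (hεlim.eventually_le_const one_pos)] with k h1 h2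
    calc PnuObj (fν (φ k)) (σ (φ k)) (θ (φ k)) (xs (φ k)) (ys (φ k)) (us (φ k)) (αs (φ k))
        ≤ PnuVal X Y D (Yν (φ k)) (fν (φ k)) (gν (φ k)) (Hν (φ k)) (σ (φ k)) (θ (φ k))
            (lamBar (φ k)) (τν (φ k)) + ((ε (φ k) : ℝ) : EReal) := (hsol (φ k)).2.2
      _ ≤ ((r + 1 : ℝ) : EReal) + ((1 : ℝ) : EReal) :=
          add_le_add h1 (EReal.coe_le_coe_iff.2 h2)
      _ = ((r + 2 : ℝ) : EReal) := by norm_cast; ring_nf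
  have hskC : ∀ᶠ k in atTop, σ (φ k) * ‖us (φ k)‖ - θ (φ k) * αs (φ k) ≤ r + 2 - b₀ := by
    filter_upwards [hFev, hobjle] with k h1 h2
    have h3 : (b₀ : EReal) + ((σ (φ k) * ‖us (φ k)‖ - θ (φ k) * αs (φ k) : ℝ) : EReal)
        ≤ ((r + 2 : ℝ) : EReal) := le_trans (add_le_add_left h1.le _) h2
    rw [← EReal.coe_add, EReal.coe_le_coe_iff] at h3
    linarith
  have hσφ : Tendsto (fun k => σ (φ k)) atTop atTop := hσ.comp hφtop
  have hθφ : Tendsto (fun k => θ (φ k)) atTop atTop := hθ.comp hφtop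
  have hu0 : Tendsto (fun k => ‖us (φ k)‖) atTop (𝓝 0) := by
    have hub : ∀ᶠ k in atTop, ‖us (φ k)‖ ≤ (r + 2 - b₀) / σ (φ k) := by
      filter_upwards [hskC, hσφ.eventually_ge_atTop 1] with k h1 h2
      have h3 : σ (φ k) * ‖us (φ k)‖ ≤ r + 2 - b₀ := by
        have := mul_nonpos_of_nonneg_of_nonpos (ba.θ_nonneg (φ k)) (hαle (φ k))
        linarith
      rw [le_div_iff₀ (by linarith : (0:ℝ) < σ (φ k))]
      nlinarith
    exact tendsto_of_tendsto_of_tendsto_of_le_of_le' tendsto_const_nhds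
      (tendsto_const_nhds.div_atTop hσφ) (Eventually.of_forall fun k => norm_nonneg _) hub
  have hhatu : hatu = 0 := norm_eq_zero.1 (tendsto_nhds_unique hcu.norm hu0)
  have hα0' : Tendsto (fun k => αs (φ k)) atTop (𝓝 0) := by
    have hlb : ∀ᶠ k in atTop, -((r + 2 - b₀) / θ (φ k)) ≤ αs (φ k) := by
      filter_upwards [hskC, hθφ.eventually_ge_atTop 1] with k h1 h2
      have h3 : -(θ (φ k) * αs (φ k)) ≤ r + 2 - b₀ := by
        have := mul_nonneg (ba.σ_nonneg (φ k)) (norm_nonneg (us (φ k)))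
        linarith
      have h4 : -αs (φ k) ≤ (r + 2 - b₀) / θ (φ k) := by
        rw [le_div_iff₀ (by linarith : (0:ℝ) < θ (φ k))]
        nlinarith
      linarith
    have hneg : Tendsto (fun k => -((r + 2 - b₀) / θ (φ k))) atTop (𝓝 0) := by
      have h5 : Tendsto (fun k => (r + 2 - b₀) / θ (φ k)) atTop (𝓝 0) :=
        tendsto_const_nhds.div_atTop hθφ
      simpa using h5.neg
    exact tendsto_of_tendsto_of_tendsto_of_le_of_le' hneg tendsto_const_nhds hlb
      (Eventually.of_forall fun k => hαle _)
  have hhatα : hatα = 0 := tendsto_nhds_unique hcα hα0'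
  -- limit of H and g along the subsequence
  have htenW : Tendsto (fun k => (xs (φ k), ys (φ k))) atTop (𝓝[X ×ˢ Y] (hatx, haty)) :=
    tendsto_nhdsWithin_iff.2 ⟨hcx.prodMk_nhds hcy, Eventually.of_forall fun k => ⟨hxX _, hyY _⟩⟩
  have hHten : Tendsto (fun k => H (xs (φ k), ys (φ k))) atTop (𝓝 (H (hatx, haty))) :=
    Tendsto.comp (ba.H_cont _ ⟨hxhat, hyhat⟩) htenW
  have hgten : Tendsto (fun k => g (xs (φ k), ys (φ k))) atTop (𝓝 (g (hatx, haty))) :=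
    Tendsto.comp (ba.g_cont _ ⟨hxhat, hyhat⟩) htenW
  have hηφ : Tendsto (fun k => η (φ k)) atTop (𝓝 0) := ba.η_lim.comp hφtop
  have hδφ : Tendsto (fun k => δ (φ k)) atTop (𝓝 0) := ba.δ_lim.comp hφtop
  have hdistH := Tendsto.comp ((continuous_infDist_pt D).tendsto (H (hatx, haty))) hHten
  have hdist0 : Tendsto (fun k => infDist (H (xs (φ k), ys (φ k))) D) atTop (𝓝 0) := by
    have hub : ∀ k, infDist (H (xs (φ k), ys (φ k))) D ≤ ‖us (φ k)‖ + η (φ k) := by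
      intro k
      have h1 := (abs_le.1 (ba.H_err (φ k) (xs (φ k)) (hxX (φ k)) (ys (φ k)) (hyY (φ k)))).1
      have h2 : infDist (Hν (φ k) (xs (φ k), ys (φ k))) D ≤ ‖us (φ k)‖ := by
        have := infDist_le_dist_of_mem (x := Hν (φ k) (xs (φ k), ys (φ k))) (hHmem (φ k))
        rwa [dist_self_add_right] at this
      linarith
    have hlim : Tendsto (fun k => ‖us (φ k)‖ + η (φ k)) atTop (𝓝 0) := by
      simpa using hu0.add hηφ
    exact tendsto_of_tendsto_of_tendsto_of_le_of_le tendsto_const_nhds hlim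
      (fun k => infDist_nonneg) hub
  have hHfeas : H (hatx, haty) ∈ D := by
    rw [ba.D_closed.mem_iff_infDist_zero ba.D_nonempty]
    exact tendsto_nhds_unique hdistH hdist0
  -- auxiliary limits
  have hθ1 : ∀ᶠ ν in atTop, 1 ≤ θ ν := hθ.eventually_ge_atTop 1
  have hτabs : Tendsto (fun ν => |τν ν - τ|) atTop (𝓝 0) := by
    refine tendsto_of_tendsto_of_tendsto_of_le_of_le' tendsto_const_nhds hrate
      (Eventually.of_forall fun ν => abs_nonneg _) ?_
    filter_upwards [hθ1] with ν h1
    nlinarith [abs_nonneg (τν ν - τ)]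
  have hτlim : Tendsto τν atTop (𝓝 τ) := by
    have h1 : Tendsto (fun ν => τν ν - τ) atTop (𝓝 0) :=
      tendsto_of_tendsto_of_tendsto_of_le_of_le (by simpa using hτabs.neg) hτabs
        (fun ν => neg_abs_le _) (fun ν => le_abs_self _)
    have := h1.add_const τ
    simpa using this
  have hlbη : Tendsto (fun ν => lamBar ν * η ν) atTop (𝓝 0) := by
    refine tendsto_of_tendsto_of_tendsto_of_le_of_le' tendsto_const_nhds ba.θlamη_lim
      (Eventually.of_forall fun ν => mul_nonneg (ba.lamBar_nonneg ν) (hη0 ν)) ?_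
    filter_upwards [hθ1] with ν h1
    nlinarith [mul_nonneg (ba.lamBar_nonneg ν) (hη0 ν)]
  have hτφ : Tendsto (fun k => τν (φ k)) atTop (𝓝 τ) := hτlim.comp hφtop
  have hlbηφ : Tendsto (fun k => lamBar (φ k) * η (φ k)) atTop (𝓝 0) := hlbη.comp hφtop
  -- near-optimality of `haty` in the lower-level problem at `hatx`
  have hτargmin : ∀ z ∈ Y, H (hatx, z) ∈ D → g (hatx, haty) ≤ g (hatx, z) + τ := by
    intro z hzY hzD
    obtain ⟨lamL, ρ, hlamL0, hρ, hLC⟩ := hloc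
    refine le_of_forall_pos_le_add fun κ hκ => ?_
    have htenz : Tendsto (fun k => (xs (φ k), z)) atTop (𝓝[X ×ˢ Y] (hatx, z)) :=
      tendsto_nhdsWithin_iff.2 ⟨hcx.prodMk_nhds tendsto_const_nhds,
        Eventually.of_forall fun k => ⟨hxX _, hzY⟩⟩
    have hHzten : Tendsto (fun k => H (xs (φ k), z)) atTop (𝓝 (H (hatx, z))) :=
      Tendsto.comp (ba.H_cont _ ⟨hxhat, hzY⟩) htenz
    have hgzten : Tendsto (fun k => g (xs (φ k), z)) atTop (𝓝 (g (hatx, z))) :=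
      Tendsto.comp (ba.g_cont _ ⟨hxhat, hzY⟩) htenz
    have hdten : Tendsto (fun k => infDist (H (xs (φ k), z)) D) atTop (𝓝 0) := by
      have h0 := Tendsto.comp ((continuous_infDist_pt D).tendsto (H (hatx, z))) hHzten
      rw [infDist_zero_of_mem hzD] at h0
      exact h0
    have hball : ∀ᶠ k in atTop, xs (φ k) ∈ Metric.closedBall hatx ρ :=
      hcx.eventually_mem (Metric.closedBall_mem_nhds _ hρ)
    have hYeq : ∀ᶠ k in atTop, Yν (φ k) = Y := hφtop.eventually hYν
    have hmain : ∀ᶠ k in atTop,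
        g (xs (φ k), ys (φ k)) + αs (φ k) ≤
          g (xs (φ k), z) + lamL * infDist (H (xs (φ k), z)) D + κ + 2 * δ (φ k)
            + lamBar (φ k) * η (φ k) + τν (φ k) := by
      filter_upwards [hball, hYeq] with k hbk hYk
      obtain ⟨p, hpD, hp⟩ := ba.D_closed.exists_infDist_eq_dist ba.D_nonempty (H (xs (φ k), z))
      have hmemk : H (xs (φ k), z) + (p - H (xs (φ k), z)) ∈ D := by simpa using hpD
      have hnk : ‖p - H (xs (φ k), z)‖ = infDist (H (xs (φ k), z)) D := by
        rw [hp, dist_eq_norm, norm_sub_rev]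
      have h2 : Vfun Y D g H (xs (φ k)) (p - H (xs (φ k), z)) ≤ ((g (xs (φ k), z) : ℝ) : EReal) :=
        Vfun_le_of_mem _ _ _ _ _ _ hzY hmemk
      have h4 : Vfun Y D g H (xs (φ k)) 0
          ≤ ((g (xs (φ k), z) + lamL * ‖p - H (xs (φ k), z)‖ : ℝ) : EReal) :=
        er_le_add _ _ _ ((hLC _ hbk _).trans h2)
      have h5 : Vfun Y D g H (xs (φ k)) 0
          < ((g (xs (φ k), z) + lamL * ‖p - H (xs (φ k), z)‖ + κ : ℝ) : EReal) :=
        lt_of_le_of_lt h4 (EReal.coe_lt_coe_iff.2 (by linarith))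
      obtain ⟨w, hwY, hwD, hwlt⟩ := Vfun_lt_exists h5
      have hwD' : H (xs (φ k), w) ∈ D := by simpa using hwD
      have hw0 : g (xs (φ k), w) < g (xs (φ k), z) + lamL * ‖p - H (xs (φ k), z)‖ + κ :=
        EReal.coe_lt_coe_iff.1 hwlt
      rw [hnk] at hw0
      have hcons := (hfeasν (φ k)).2.2.2.2.2.2 w (hYk ▸ hwY)
      have e1 := (abs_le.1 (ba.g_err (φ k) (xs (φ k)) (hxX (φ k)) (ys (φ k)) (hyY (φ k)))).1
      have e2 := (abs_le.1 (ba.g_err (φ k) (xs (φ k)) (hxX (φ k)) w hwY)).2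
      have e3 := (abs_le.1 (ba.H_err (φ k) (xs (φ k)) (hxX (φ k)) w hwY)).2
      rw [infDist_zero_of_mem hwD'] at e3
      have e5 : lams (φ k) * infDist (Hν (φ k) (xs (φ k), w)) D ≤ lamBar (φ k) * η (φ k) := by
        have hd0 : (0:ℝ) ≤ infDist (Hν (φ k) (xs (φ k), w)) D := infDist_nonneg
        have hdη : infDist (Hν (φ k) (xs (φ k), w)) D ≤ η (φ k) := by linarith
        exact mul_le_mul (hlamle _) hdη hd0 (ba.lamBar_nonneg _)
      linarith
    have hL : Tendsto (fun k => g (xs (φ k), ys (φ k)) + αs (φ k)) atTop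
        (𝓝 (g (hatx, haty))) := by
      have := hgten.add hcα
      rw [hhatα] at this
      simpa using this
    have hR : Tendsto (fun k => g (xs (φ k), z) + lamL * infDist (H (xs (φ k), z)) D + κ
        + 2 * δ (φ k) + lamBar (φ k) * η (φ k) + τν (φ k)) atTop
        (𝓝 (g (hatx, z) + lamL * 0 + κ + 2 * 0 + 0 + τ)) :=
      ((((hgzten.add (hdten.const_mul lamL)).add tendsto_const_nhds).add
        (hδφ.const_mul 2)).add hlbηφ).add hτφ
    have hfin := le_of_tendsto_of_tendsto hL hR hmain
    linarith
  have hfeashat : PFeas X Y D g H τ hatx haty := ⟨hxhat, hyhat, hHfeas, hτargmin⟩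
  have hPle : PVal X Y D f g H τ ≤ f (hatx, haty) := by
    unfold PVal
    exact iInf_le_of_le hatx (iInf_le_of_le haty (iInf_le _ hfeashat))
  have hge : (r : EReal) ≤ f (hatx, haty) := by rw [← hPVal]; exact hPle
  have hle : f (hatx, haty) ≤ (r : EReal) := by
    refine er_le_of_forall _ _ fun ε' hε' => ?_
    refine hFliminf.trans ?_
    have hev : ∀ᶠ k in atTop, fν (φ k) (xs (φ k), ys (φ k)) ≤ ((r + ε' : ℝ) : EReal) := by
      filter_upwards [hφtop.eventually (hB (ε' / 2) (by linarith)),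
        hφtop.eventually (hεlim.eventually_le_const (by linarith : (0:ℝ) < ε' / 2))] with k h1 h2
      have h5 : (0 : EReal) ≤ ((σ (φ k) * ‖us (φ k)‖ - θ (φ k) * αs (φ k) : ℝ) : EReal) := by
        exact_mod_cast hsknn (φ k)
      have h4 : fν (φ k) (xs (φ k), ys (φ k))
          ≤ PnuObj (fν (φ k)) (σ (φ k)) (θ (φ k)) (xs (φ k)) (ys (φ k)) (us (φ k)) (αs (φ k)) := by
        calc fν (φ k) (xs (φ k), ys (φ k)) = fν (φ k) (xs (φ k), ys (φ k)) + 0 := (add_zero _).symm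
          _ ≤ _ := add_le_add_right h5 _
      refine h4.trans (((hsol (φ k)).2.2).trans ?_)
      calc PnuVal X Y D (Yν (φ k)) (fν (φ k)) (gν (φ k)) (Hν (φ k)) (σ (φ k)) (θ (φ k))
            (lamBar (φ k)) (τν (φ k)) + ((ε (φ k) : ℝ) : EReal)
          ≤ ((r + ε' / 2 : ℝ) : EReal) + ((ε' / 2 : ℝ) : EReal) :=
            add_le_add h1 (EReal.coe_le_coe_iff.2 h2)
        _ = ((r + ε' : ℝ) : EReal) := by norm_cast; ring_nf
    calc liminf (fun k => fν (φ k) (xs (φ k), ys (φ k))) atTop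
        ≤ liminf (fun _ => ((r + ε' : ℝ) : EReal)) atTop := liminf_le_liminf hev
      _ = ((r + ε' : ℝ) : EReal) := liminf_const _
  have hfr : f (hatx, haty) = (r : EReal) := le_antisymm hle hge
  refine ⟨⟨hfeashat, by rw [hfr]; exact EReal.coe_ne_top r, by rw [hfr, hPVal]⟩, r, hPVal, ?_⟩
  have hlow : ∀ ε' : ℝ, 0 < ε' → ∀ᶠ k in atTop, ((r - ε' : ℝ) : EReal)
      ≤ PnuVal X Y D (Yν (φ k)) (fν (φ k)) (gν (φ k)) (Hν (φ k)) (σ (φ k)) (θ (φ k))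
          (lamBar (φ k)) (τν (φ k)) := by
    intro ε' hε'
    have h1 : ((r - ε' / 2 : ℝ) : EReal) < liminf (fun k => fν (φ k) (xs (φ k), ys (φ k))) atTop := by
      refine lt_of_lt_of_le ?_ (hfr ▸ hFliminf)
      exact_mod_cast (by linarith : r - ε' / 2 < r)
    filter_upwards [eventually_lt_of_lt_liminf h1,
      hφtop.eventually (hεlim.eventually_le_const (by linarith : (0:ℝ) < ε' / 2))] with k h2 h3
    have h5 : (0 : EReal) ≤ ((σ (φ k) * ‖us (φ k)‖ - θ (φ k) * αs (φ k) : ℝ) : EReal) := by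
      exact_mod_cast hsknn (φ k)
    have h4 : fν (φ k) (xs (φ k), ys (φ k))
        ≤ PnuObj (fν (φ k)) (σ (φ k)) (θ (φ k)) (xs (φ k)) (ys (φ k)) (us (φ k)) (αs (φ k)) := by
      calc fν (φ k) (xs (φ k), ys (φ k)) = fν (φ k) (xs (φ k), ys (φ k)) + 0 := (add_zero _).symm
        _ ≤ _ := add_le_add_right h5 _
    have h6 : ((r - ε' / 2 : ℝ) : EReal)
        ≤ PnuVal X Y D (Yν (φ k)) (fν (φ k)) (gν (φ k)) (Hν (φ k)) (σ (φ k)) (θ (φ k))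
            (lamBar (φ k)) (τν (φ k)) + ((ε' / 2 : ℝ) : EReal) := by
      refine le_trans (le_trans h2.le (h4.trans ((hsol (φ k)).2.2))) ?_
      exact add_le_add_right (EReal.coe_le_coe_iff.2 h3) _
    have h7 := er_sub_le _ _ _ h6
    have h8 : (r - ε' / 2 - ε' / 2 : ℝ) = r - ε' := by ring
    rwa [h8] at h7
  refine tendsto_order.2 ⟨?_, ?_⟩
  · intro a ha
    obtain ⟨c, hac, hcr⟩ := EReal.exists_between_coe_real ha
    have hcrr : c < r := EReal.coe_lt_coe_iff.1 hcr
    filter_upwards [hlow (r - c) (by linarith)] with k hk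
    refine lt_of_lt_of_le hac (le_trans ?_ hk)
    exact EReal.coe_le_coe_iff.2 (by linarith)
  · intro b hb
    obtain ⟨c, hrc, hcb⟩ := EReal.exists_between_coe_real hb
    have hrcc : r < c := EReal.coe_lt_coe_iff.1 hrc
    filter_upwards [hφtop.eventually (hB (c - r) (by linarith))] with k hk
    refine lt_of_le_of_lt (le_trans hk ?_) hcb
    exact EReal.coe_le_coe_iff.2 (by linarith)
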